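/- In a pre-Hilbert C*-bimodule M over unital C*-algebras A and B satisfying the compatibility condition ⟨x,x⟩_A · x = x · ⟨x,x⟩_B for all x ∈ M, the two norms ‖x‖_left := ‖⟨x,x⟩_A‖^{1/2} and ‖x‖_right := ‖⟨x,x⟩_B‖^{1/2} coincide. -/

import Mathlib

/-- A pre-Hilbert C*-bimodule `M` over unital C*-algebras `A` (on the left) and
`B` (on the right): a left pre-Hilbert C*-module over `A` (inner product `innerL`,
`A`-linear in the first variable) and a right pre-Hilbert C*-module over `B`
(inner product `innerR`, `B`-linear in the second variable), with compatible
actions. -/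
structure PreHilbertBimodule (A B M : Type*) [CStarAlgebra A] [CStarAlgebra B]
    [AddCommGroup M] [Module ℂ M] where
  lsmul : A → M → M
  rsmul : M → B → M
  innerL : M → M → A
  innerR : M → M → B
  lsmul_dist : ∀ a x y, lsmul a (x + y) = lsmul a x + lsmul a y
  add_lsmul : ∀ a b x, lsmul (a + b) x = lsmul a x + lsmul b x
  mul_lsmul : ∀ a b x, lsmul (a * b) x = lsmul a (lsmul b x)
  one_lsmul : ∀ x, lsmul 1 x = x
  lsmul_csmul : ∀ (c : ℂ) a x, lsmul a (c • x) = c • lsmul a x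
  csmul_lsmul : ∀ (c : ℂ) a x, lsmul (c • a) x = c • lsmul a x
  rsmul_dist : ∀ x y b, rsmul (x + y) b = rsmul x b + rsmul y b
  rsmul_add : ∀ x a b, rsmul x (a + b) = rsmul x a + rsmul x b
  rsmul_mul : ∀ x a b, rsmul (rsmul x a) b = rsmul x (a * b)
  rsmul_one : ∀ x, rsmul x 1 = x
  rsmul_csmul : ∀ (c : ℂ) x b, rsmul (c • x) b = c • rsmul x b
  rsmul_calg : ∀ (c : ℂ) x b, rsmul x (c • b) = c • rsmul x b
  lsmul_rsmul : ∀ a x b, lsmul a (rsmul x b) = rsmul (lsmul a x) b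
  innerR_add_right : ∀ x y z, innerR x (y + z) = innerR x y + innerR x z
  innerR_rsmul_right : ∀ x y b, innerR x (rsmul y b) = innerR x y * b
  innerR_conj_symm : ∀ x y, innerR y x = star (innerR x y)
  innerR_csmul_right : ∀ (c : ℂ) x y, innerR x (c • y) = c • innerR x y
  innerR_self_pos : ∀ x, ∃ b, innerR x x = star b * b
  innerR_self_definite : ∀ x, innerR x x = 0 → x = 0
  innerL_add_left : ∀ x y z, innerL (x + y) z = innerL x z + innerL y z
  innerL_lsmul_left : ∀ a x y, innerL (lsmul a x) y = a * innerL x y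
  innerL_conj_symm : ∀ x y, innerL y x = star (innerL x y)
  innerL_csmul_left : ∀ (c : ℂ) x y, innerL (c • x) y = c • innerL x y
  innerL_self_pos : ∀ x, ∃ a, innerL x x = star a * a
  innerL_self_definite : ∀ x, innerL x x = 0 → x = 0
  innerR_lsmul : ∀ a x y, innerR x (lsmul a y) = innerR (lsmul (star a) x) y
  innerL_rsmul : ∀ x y b, innerL (rsmul x b) y = innerL x (rsmul y (star b))

/-- An imprimitivity (equivalence) Hilbert C*-bimodule over `A` and `B`: a
pre-Hilbert C*-bimodule that is full as a left and as a right Hilbert C*-module,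
satisfies the imprimitivity condition `⟨x,y⟩_A·z = x·⟨y,z⟩_B`, and is complete
(for the common norm induced by the inner products). -/
structure ImprimitivityBimodule (A B M : Type*) [CStarAlgebra A] [CStarAlgebra B]
    [AddCommGroup M] [Module ℂ M] extends PreHilbertBimodule A B M where
  imprimitivity : ∀ x y z, lsmul (innerL x y) z = rsmul x (innerR y z)
  fullL : closure (Submodule.span ℂ {a : A | ∃ x y : M, a = innerL x y} : Set A)
      = Set.univ
  fullR : closure (Submodule.span ℂ {b : B | ∃ x y : M, b = innerR x y} : Set B)
      = Set.univ
  complete : ∀ f : ℕ → M,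
    (∀ ε > 0, ∃ N, ∀ m ≥ N, ∀ n ≥ N,
      ‖innerR (f m - f n) (f m - f n)‖ < ε) →
    ∃ x, ∀ ε > 0, ∃ N, ∀ n ≥ N, ‖innerR (f n - x) (f n - x)‖ < ε

/-- In a pre-Hilbert C*-bimodule `M` over `A` and `B` satisfying
`⟨x,x⟩_A·x = x·⟨x,x⟩_B` for all `x`, the two natural norms
`‖x‖ = √‖⟨x,x⟩_A‖` and `‖x‖ = √‖⟨x,x⟩_B‖` coincide. -/
theorem preHilbertBimodule_norms_eq
    {A B M : Type*} [CStarAlgebra A] [CStarAlgebra B]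
    [AddCommGroup M] [Module ℂ M]
    (H : PreHilbertBimodule A B M)
    (hcompat : ∀ x : M, H.lsmul (H.innerL x x) x = H.rsmul x (H.innerR x x)) :
    ∀ x : M, Real.sqrt ‖H.innerL x x‖ = Real.sqrt ‖H.innerR x x‖ := by
  intro x
  letI : PartialOrder A := CStarAlgebra.spectralOrder A
  letI : StarOrderedRing A := CStarAlgebra.spectralOrderedRing A
  letI : PartialOrder B := CStarAlgebra.spectralOrder B
  letI : StarOrderedRing B := CStarAlgebra.spectralOrderedRing B
  set a := H.innerL x x with ha_def
  set b := H.innerR x x with hb_def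
  have ha_star : star a = a := (H.innerL_conj_symm x x).symm
  have hb_star : star b = b := (H.innerR_conj_symm x x).symm
  have ha_sa : IsSelfAdjoint a := ha_star
  have hb_sa : IsSelfAdjoint b := hb_star
  have ha_pos : 0 ≤ a := by
    obtain ⟨c, hc⟩ := H.innerL_self_pos x
    rw [← ha_def] at hc
    rw [hc]; exact star_mul_self_nonneg c
  have hb_pos : 0 ≤ b := by
    obtain ⟨c, hc⟩ := H.innerR_self_pos x
    rw [← hb_def] at hc
    rw [hc]; exact star_mul_self_nonneg c
  -- subtraction lemmas
  have hlsub : ∀ (u v : A) (y : M), H.lsmul (u - v) y = H.lsmul u y - H.lsmul v y := by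
    intro u v y
    have h := H.add_lsmul (u - v) v y
    rw [sub_add_cancel] at h
    exact eq_sub_of_add_eq h.symm
  have hrsub : ∀ (y : M) (u v : B), H.rsmul y (u - v) = H.rsmul y u - H.rsmul y v := by
    intro y u v
    have h := H.rsmul_add y (u - v) v
    rw [sub_add_cancel] at h
    exact eq_sub_of_add_eq h.symm
  have hRsub : ∀ (y z w : M), H.innerR y (z - w) = H.innerR y z - H.innerR y w := by
    intro y z w
    rw [sub_eq_add_neg, H.innerR_add_right, ← neg_one_smul ℂ w, H.innerR_csmul_right,
      neg_one_smul, ← sub_eq_add_neg]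
  have hLadd : ∀ (y z w : M), H.innerL y (z + w) = H.innerL y z + H.innerL y w := by
    intro y z w
    rw [H.innerL_conj_symm, H.innerL_add_left, star_add, ← H.innerL_conj_symm,
      ← H.innerL_conj_symm]
  have hLcsmul : ∀ (c : ℂ) (y z : M), H.innerL y (c • z) = (starRingEnd ℂ c) • H.innerL y z := by
    intro c y z
    rw [H.innerL_conj_symm, H.innerL_csmul_left, star_smul, ← H.innerL_conj_symm]
    rfl
  have hLsub : ∀ (y z w : M), H.innerL y (z - w) = H.innerL y z - H.innerL y w := by
    intro y z w
    rw [sub_eq_add_neg, hLadd, ← neg_one_smul ℂ w, hLcsmul]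
    simp [sub_eq_add_neg]
  -- scalar actions
  have hlsmul_real : ∀ (r : ℝ), H.lsmul (algebraMap ℝ A r) x = (r : ℂ) • x := by
    intro r
    have h1 : algebraMap ℝ A r = (r : ℂ) • (1 : A) := by
      rw [Algebra.algebraMap_eq_smul_one]
      norm_num
    rw [h1, H.csmul_lsmul, H.one_lsmul]
  have hrsmul_real : ∀ (r : ℝ), H.rsmul x (algebraMap ℝ B r) = (r : ℂ) • x := by
    intro r
    have h1 : algebraMap ℝ B r = (r : ℂ) • (1 : B) := by
      rw [Algebra.algebraMap_eq_smul_one]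
      norm_num
    rw [h1, H.rsmul_calg, H.rsmul_one]
  -- B-side inequality : b * b ≤ ‖a‖ • b
  have hB : ‖b‖ * ‖b‖ ≤ ‖a‖ * ‖b‖ := by
    set p : A := algebraMap ℝ A ‖a‖ - a with hp_def
    have hp : 0 ≤ p := sub_nonneg.mpr ha_sa.le_algebraMap_norm_self
    set e := CFC.sqrt p with he_def
    have he_nonneg : 0 ≤ e := CFC.sqrt_nonneg p
    have he_star : star e = e := IsSelfAdjoint.of_nonneg he_nonneg
    have he : star e * e = p := by rw [he_star]; exact CFC.sqrt_mul_sqrt_self p hp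
    have pos1 : 0 ≤ H.innerR x (H.lsmul p x) := by
      rw [← he, H.mul_lsmul, H.innerR_lsmul, star_star]
      obtain ⟨d, hd⟩ := H.innerR_self_pos (H.lsmul e x)
      rw [hd]; exact star_mul_self_nonneg d
    have compute : H.innerR x (H.lsmul p x) = (‖a‖ : ℂ) • b - b * b := by
      rw [hp_def, hlsub, hlsmul_real, hcompat x, hRsub, H.innerR_csmul_right,
        H.innerR_rsmul_right, ← hb_def]
    have hcoe : (‖a‖ : ℂ) • b = ‖a‖ • b := by norm_num
    rw [compute, hcoe, sub_nonneg] at pos1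
    have hbb : b * b = star b * b := by rw [hb_star]
    have hnn : 0 ≤ b * b := by rw [hbb]; exact star_mul_self_nonneg b
    have := CStarAlgebra.norm_le_norm_of_nonneg_of_le hnn pos1
    rw [hbb, CStarRing.norm_star_mul_self] at this
    calc ‖b‖ * ‖b‖ ≤ ‖(‖a‖ : ℝ) • b‖ := this
      _ = ‖a‖ * ‖b‖ := by rw [norm_smul, Real.norm_of_nonneg (norm_nonneg a)]
  -- A-side inequality : a * a ≤ ‖b‖ • a
  have hA : ‖a‖ * ‖a‖ ≤ ‖b‖ * ‖a‖ := by
    set q : B := algebraMap ℝ B ‖b‖ - b with hq_def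
    have hq : 0 ≤ q := sub_nonneg.mpr hb_sa.le_algebraMap_norm_self
    set f := CFC.sqrt q with hf_def
    have hf_nonneg : 0 ≤ f := CFC.sqrt_nonneg q
    have hf_star : star f = f := IsSelfAdjoint.of_nonneg hf_nonneg
    have hf : star f * f = q := by rw [hf_star]; exact CFC.sqrt_mul_sqrt_self q hq
    have key : H.innerL x (H.rsmul x (star f * f)) =
        H.innerL (H.rsmul x (star f)) (H.rsmul x (star f)) := by
      rw [H.innerL_rsmul, star_star, H.rsmul_mul]
    have pos2 : 0 ≤ H.innerL x (H.rsmul x q) := by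
      rw [← hf, key]
      obtain ⟨d, hd⟩ := H.innerL_self_pos (H.rsmul x (star f))
      rw [hd]; exact star_mul_self_nonneg d
    have hax : H.innerL x (H.lsmul a x) = a * a := by
      rw [H.innerL_conj_symm, H.innerL_lsmul_left, ← ha_def, star_mul, ha_star]
    have compute : H.innerL x (H.rsmul x q) = (‖b‖ : ℂ) • a - a * a := by
      rw [hq_def, hrsub, hrsmul_real, ← hcompat x, hLsub, hLcsmul, hax, ← ha_def]
      norm_num
    have hcoe : (‖b‖ : ℂ) • a = ‖b‖ • a := by norm_num
    rw [compute, hcoe, sub_nonneg] at pos2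
    have haa : a * a = star a * a := by rw [ha_star]
    have hnn : 0 ≤ a * a := by rw [haa]; exact star_mul_self_nonneg a
    have := CStarAlgebra.norm_le_norm_of_nonneg_of_le hnn pos2
    rw [haa, CStarRing.norm_star_mul_self] at this
    calc ‖a‖ * ‖a‖ ≤ ‖(‖b‖ : ℝ) • a‖ := this
      _ = ‖b‖ * ‖a‖ := by rw [norm_smul, Real.norm_of_nonneg (norm_nonneg b)]
  have hab : ‖a‖ = ‖b‖ := by
    nlinarith [sq_nonneg (‖a‖ - ‖b‖), norm_nonneg a, norm_nonneg b]
  rw [hab]
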